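/- Let L/K be a cyclic unramified (at all finite places) extension of number fields with Galois group G = ⟨g⟩. The map φ_g sending the class [I] ∈ ker(Cl(K) → Cl(L)) to the class of g(y)/y in H^{-1}(G, E_L), where y ∈ L^* is any generator of the (principal) extension of I to L, is a well-defined group homomorphism. -/

import Mathlib

open NumberField
open scoped nonZeroDivisors

variable (K L : Type*) [Field K] [NumberField K] [Field L] [NumberField L]
  [Algebra K L] [IsGalois K L]

/-- The action of `σ ∈ Gal(L/K)` on the unit group `E_L = (𝓞 L)ˣ`. -/
noncomputable def unitAct (σ : L ≃ₐ[K] L) : (𝓞 L)ˣ →* (𝓞 L)ˣ :=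
  Units.map (galRestrict (𝓞 K) K L (𝓞 L) σ : (𝓞 L) →* (𝓞 L))

/-- The norm map `N_G : E_L → E_L`, `u ↦ ∏_{σ ∈ Gal(L/K)} σ(u)`. -/
noncomputable def normE : (𝓞 L)ˣ →* (𝓞 L)ˣ :=
  MonoidHom.mk' (fun x => ∏ σ : L ≃ₐ[K] L, unitAct K L σ x)
    (fun a b => by simp [map_mul, Finset.prod_mul_distrib])

/-- The augmentation subgroup `I_G E_L`, generated by the `σ(u)/u`. -/
noncomputable def augE : Subgroup (𝓞 L)ˣ :=
  Subgroup.closure {u : (𝓞 L)ˣ | ∃ (σ : L ≃ₐ[K] L) (x : (𝓞 L)ˣ), u = unitAct K L σ x / x}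

set_option linter.unusedSectionVars false

section Aux
variable {K L}

lemma aux_y_ne (I : (Ideal (𝓞 K))⁰) (y : 𝓞 L)
    (hy : Ideal.map (algebraMap (𝓞 K) (𝓞 L)) (I : Ideal (𝓞 K)) = Ideal.span {y}) : y ≠ 0 := by
  intro h0
  rw [h0, Ideal.span_singleton_eq_bot.mpr rfl,
    Ideal.map_eq_bot_iff_of_injective (FaithfulSMul.algebraMap_injective _ _)] at hy
  exact nonZeroDivisors.ne_zero I.2 hy

lemma aux_stable (σ : L ≃ₐ[K] L) (I : Ideal (𝓞 K)) :
    Ideal.map (galRestrict (𝓞 K) K L (𝓞 L) σ) (Ideal.map (algebraMap (𝓞 K) (𝓞 L)) I)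
      = Ideal.map (algebraMap (𝓞 K) (𝓞 L)) I := by
  rw [show Ideal.map (algebraMap (𝓞 K) (𝓞 L)) I
      = Ideal.span ((algebraMap (𝓞 K) (𝓞 L)) '' I) from rfl,
    Ideal.map_span, ← Set.image_comp]
  congr 1
  exact Set.image_congr fun a _ => AlgEquiv.commutes _ a

lemma aux_exists (g : L ≃ₐ[K] L) (I : (Ideal (𝓞 K))⁰) (y : 𝓞 L)
    (hy : Ideal.map (algebraMap (𝓞 K) (𝓞 L)) (I : Ideal (𝓞 K)) = Ideal.span {y}) :
    ∃ u : (𝓞 L)ˣ, galRestrict (𝓞 K) K L (𝓞 L) g y = u * y := by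
  have hst := aux_stable g (I : Ideal (𝓞 K))
  rw [hy, Ideal.map_span, Set.image_singleton] at hst
  obtain ⟨u, hu⟩ := Ideal.span_singleton_eq_span_singleton.mp hst.symm
  exact ⟨u, by rw [← hu, mul_comm]⟩

end Aux

/-- The map `φ_g : ker(Cl(K) → Cl(L)) → H^{-1}(G, E_L)`, `[I] ↦ g(y)/y mod I_G E_L` where
`y` generates the extension of `I` to `L`, is well defined and a group homomorphism:
`g(y)/y` is a unit lying in the kernel of the norm, its class modulo `I_G E_L` does not
depend on the choice of the representative ideal nor of its generator, and the map is
multiplicative. -/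
theorem stmt14
    (g : L ≃ₐ[K] L) (hg : ∀ σ : L ≃ₐ[K] L, σ ∈ Subgroup.zpowers g)
    (hur : ∀ P : Ideal (𝓞 L), P ≠ ⊥ → P.IsPrime →
      Ideal.ramificationIdx'
        (P.comap (algebraMap (𝓞 K) (𝓞 L))) P = 1)
    (I₁ I₂ : (Ideal (𝓞 K))⁰) (y₁ y₂ y₃ : 𝓞 L) (u₁ u₂ u₃ : (𝓞 L)ˣ)
    (hy₁ : Ideal.map (algebraMap (𝓞 K) (𝓞 L)) (I₁ : Ideal (𝓞 K)) = Ideal.span {y₁})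
    (hy₂ : Ideal.map (algebraMap (𝓞 K) (𝓞 L)) (I₂ : Ideal (𝓞 K)) = Ideal.span {y₂})
    (hy₃ : Ideal.map (algebraMap (𝓞 K) (𝓞 L)) ((I₁ * I₂ : (Ideal (𝓞 K))⁰) : Ideal (𝓞 K)) =
      Ideal.span {y₃})
    (hu₁ : galRestrict (𝓞 K) K L (𝓞 L) g y₁ = u₁ * y₁)
    (hu₂ : galRestrict (𝓞 K) K L (𝓞 L) g y₂ = u₂ * y₂)
    (hu₃ : galRestrict (𝓞 K) K L (𝓞 L) g y₃ = u₃ * y₃) :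
    -- `g(y)/y` always makes sense as a unit:
    (∀ (I : (Ideal (𝓞 K))⁰) (y : 𝓞 L),
      Ideal.map (algebraMap (𝓞 K) (𝓞 L)) (I : Ideal (𝓞 K)) = Ideal.span {y} →
      ∃ u : (𝓞 L)ˣ, galRestrict (𝓞 K) K L (𝓞 L) g y = u * y) ∧
    -- the value lies in the kernel of the norm:
    u₁ ∈ (normE K L).ker ∧
    -- the class modulo `I_G E_L` only depends on the ideal class:
    (ClassGroup.mk0 I₁ = ClassGroup.mk0 I₂ → u₁ / u₂ ∈ augE K L) ∧
    -- multiplicativity: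
    u₃ / (u₁ * u₂) ∈ augE K L := by
  have hy1ne : y₁ ≠ 0 := aux_y_ne I₁ y₁ hy₁
  have hy2ne : y₂ ≠ 0 := aux_y_ne I₂ y₂ hy₂
  have injKL : Function.Injective (algebraMap (𝓞 K) (𝓞 L)) :=
    FaithfulSMul.algebraMap_injective _ _
  have injL : Function.Injective (algebraMap (𝓞 L) L) :=
    FaithfulSMul.algebraMap_injective _ _
  refine ⟨fun I y hy => aux_exists g I y hy, ?_, ?_, ?_⟩
  · -- norm kernel
    rw [MonoidHom.mem_ker]
    refine Units.ext ?_
    have hval : ((normE K L u₁ : (𝓞 L)ˣ) : 𝓞 L)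
        = ∏ σ : L ≃ₐ[K] L, galRestrict (𝓞 K) K L (𝓞 L) σ (u₁ : 𝓞 L) := by
      show ((Units.coeHom (𝓞 L)) (∏ σ : L ≃ₐ[K] L, unitAct K L σ u₁)) = _
      rw [map_prod]
      exact Finset.prod_congr rfl fun σ _ => rfl
    apply injL
    rw [hval, map_prod, Units.val_one, map_one]
    set t : L := algebraMap (𝓞 L) L y₁ with ht
    set v : L := algebraMap (𝓞 L) L (u₁ : 𝓞 L) with hv
    have htne : t ≠ 0 := fun h => hy1ne (injL (h.trans (map_zero _).symm))
    have hgoal : (∏ σ : L ≃ₐ[K] L, algebraMap (𝓞 L) L (galRestrict (𝓞 K) K L (𝓞 L) σ (u₁ : 𝓞 L)))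
        = ∏ σ : L ≃ₐ[K] L, σ v := by
      exact Finset.prod_congr rfl fun σ _ => algebraMap_galRestrict_apply _ σ _
    rw [hgoal]
    have hvt : v * t = g t := by
      have h := congrArg (algebraMap (𝓞 L) L) hu₁
      rw [map_mul, algebraMap_galRestrict_apply] at h
      exact h.symm
    have hP : (∏ σ : L ≃ₐ[K] L, σ v) * ∏ σ : L ≃ₐ[K] L, σ t = ∏ σ : L ≃ₐ[K] L, σ t := by
      rw [← Finset.prod_mul_distrib]
      calc ∏ σ : L ≃ₐ[K] L, σ v * σ t = ∏ σ : L ≃ₐ[K] L, σ (g t) :=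
            Finset.prod_congr rfl fun σ _ => by rw [← map_mul, hvt]
        _ = ∏ σ : L ≃ₐ[K] L, σ t :=
            Fintype.prod_equiv (Equiv.mulRight g) _ _ (fun σ => rfl)
    have hPne : (∏ σ : L ≃ₐ[K] L, σ t) ≠ 0 :=
      Finset.prod_ne_zero_iff.mpr fun σ _ => fun h => htne (by simpa using h)
    exact mul_right_cancel₀ hPne (by rw [hP, one_mul])
  · -- class independence
    intro hcls
    obtain ⟨a, b, ha, hb, hab⟩ := ClassGroup.mk0_eq_mk0_iff.mp hcls
    have hab2 := congrArg (Ideal.map (algebraMap (𝓞 K) (𝓞 L))) hab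
    rw [Ideal.map_mul, Ideal.map_mul, Ideal.map_span, Ideal.map_span,
      Set.image_singleton, Set.image_singleton, hy₁, hy₂,
      Ideal.span_singleton_mul_span_singleton, Ideal.span_singleton_mul_span_singleton] at hab2
    obtain ⟨w, hw⟩ := Ideal.span_singleton_eq_span_singleton.mp hab2
    set a' := algebraMap (𝓞 K) (𝓞 L) a with ha'
    set b' := algebraMap (𝓞 K) (𝓞 L) b with hb'
    have hane : a' ≠ 0 := fun h => ha (injKL (h.trans (map_zero _).symm))
    have h2 := congrArg (galRestrict (𝓞 K) K L (𝓞 L) g) hw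
    simp only [map_mul] at h2
    have hca : galRestrict (𝓞 K) K L (𝓞 L) g a' = a' :=
      AlgEquiv.commutes (galRestrict (𝓞 K) K L (𝓞 L) g) a
    have hcb : galRestrict (𝓞 K) K L (𝓞 L) g b' = b' :=
      AlgEquiv.commutes (galRestrict (𝓞 K) K L (𝓞 L) g) b
    rw [hu₁, hu₂, hca, hcb] at h2
    -- h2 : a' * (↑u₁ * y₁) * σg ↑w = b' * (↑u₂ * y₂)
    have h3 : ((u₁ : 𝓞 L) * (galRestrict (𝓞 K) K L (𝓞 L) g (w : 𝓞 L))) * (a' * y₁)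
        = ((u₂ : 𝓞 L) * (w : 𝓞 L)) * (a' * y₁) := by
      calc ((u₁ : 𝓞 L) * (galRestrict (𝓞 K) K L (𝓞 L) g (w : 𝓞 L))) * (a' * y₁)
          = a' * ((u₁ : 𝓞 L) * y₁) * (galRestrict (𝓞 K) K L (𝓞 L) g (w : 𝓞 L)) := by ring
        _ = b' * ((u₂ : 𝓞 L) * y₂) := h2
        _ = (u₂ : 𝓞 L) * (b' * y₂) := by ring
        _ = (u₂ : 𝓞 L) * (a' * y₁ * (w : 𝓞 L)) := by rw [hw]
        _ = ((u₂ : 𝓞 L) * (w : 𝓞 L)) * (a' * y₁) := by ring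
    have h4 := mul_right_cancel₀ (mul_ne_zero hane hy1ne) h3
    have h5 : u₁ * unitAct K L g w = u₂ * w := Units.ext (by simpa [unitAct] using h4)
    have hmem : unitAct K L g w / w ∈ augE K L := Subgroup.subset_closure ⟨g, w, rfl⟩
    have heq : u₁ / u₂ = (unitAct K L g w / w)⁻¹ := by
      rw [inv_div, div_eq_div_iff_mul_eq_mul, h5]
      exact mul_comm _ _
    rw [heq]
    exact (augE K L).inv_mem hmem
  · -- multiplicativity
    have hy₃' : Ideal.span {y₁ * y₂} = Ideal.span {y₃} := by
      rw [← Ideal.span_singleton_mul_span_singleton, ← hy₁, ← hy₂, ← Ideal.map_mul]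
      rw [show ((I₁ * I₂ : (Ideal (𝓞 K))⁰) : Ideal (𝓞 K)) = (I₁ : Ideal (𝓞 K)) * I₂ from rfl] at hy₃
      exact hy₃
    obtain ⟨w, hw⟩ := Ideal.span_singleton_eq_span_singleton.mp hy₃'
    have h2 := congrArg (galRestrict (𝓞 K) K L (𝓞 L) g) hw
    simp only [map_mul] at h2
    rw [hu₁, hu₂, hu₃] at h2
    -- h2 : ↑u₁*y₁ * (↑u₂*y₂) * σg w = ↑u₃ * y₃
    have h3 : ((u₁ : 𝓞 L) * (u₂ : 𝓞 L) * (galRestrict (𝓞 K) K L (𝓞 L) g (w : 𝓞 L))) * (y₁ * y₂)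
        = ((u₃ : 𝓞 L) * (w : 𝓞 L)) * (y₁ * y₂) := by
      calc ((u₁ : 𝓞 L) * (u₂ : 𝓞 L) * (galRestrict (𝓞 K) K L (𝓞 L) g (w : 𝓞 L))) * (y₁ * y₂)
          = ((u₁ : 𝓞 L) * y₁) * ((u₂ : 𝓞 L) * y₂) * (galRestrict (𝓞 K) K L (𝓞 L) g (w : 𝓞 L)) := by
            ring
        _ = (u₃ : 𝓞 L) * y₃ := h2
        _ = (u₃ : 𝓞 L) * (y₁ * y₂ * (w : 𝓞 L)) := by rw [hw]
        _ = ((u₃ : 𝓞 L) * (w : 𝓞 L)) * (y₁ * y₂) := by ring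
    have h4 := mul_right_cancel₀ (mul_ne_zero hy1ne hy2ne) h3
    have h5 : (u₁ * u₂) * unitAct K L g w = u₃ * w := Units.ext (by simpa [unitAct] using h4)
    have heq : u₃ / (u₁ * u₂) = unitAct K L g w / w := by
      rw [div_eq_div_iff_mul_eq_mul, ← h5]
      exact mul_comm _ _
    rw [heq]
    exact Subgroup.subset_closure ⟨g, w, rfl⟩
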